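/- arXiv:1206.3502 — 2 statements merged into one kernel-verified Lean document; each statement's English description precedes it below -/
import Mathlib

section
/- Let σ > 0 and ω, c real with 4ω > c², write φ = φ_{ω,c}, and let k₂ be any real constant. Set v = (k₂ − φ^{2σ}/(2σ+2)) φ. Then pointwise on ℝ: L₁₁ φ_y + L₂₁ v = 0 and L₁₂ φ_y + L₂₂ v = 0. Consequently χ₁ = e^{iθ}(φ_y + i v) lies in the kernel of H_φ, where H_φ(e^{iθ}(u₁+iu₂)) = e^{iθ}[(L₁₁u₁ + L₂₁u₂) + i(L₁₂u₁ + L₂₂u₂)]. -/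
open Real MeasureTheory

/-- The solitary wave profile `φ_{ω,c}` for the generalized DNLS equation. -/
noncomputable def solProfile (σ ω c : ℝ) (y : ℝ) : ℝ :=
  ((σ + 1) * (4 * ω - c ^ 2) /
      (2 * Real.sqrt ω *
        (Real.cosh (σ * Real.sqrt (4 * ω - c ^ 2) * y) - c / (2 * Real.sqrt ω)))) ^
    (1 / (2 * σ))

/-- The traveling phase `θ_{ω,c}`. -/
noncomputable def travPhase (σ ω c : ℝ) (y : ℝ) : ℝ :=
  c / 2 * y - (1 / (2 * σ + 2)) * ∫ η in Set.Iio y, solProfile σ ω c η ^ (2 * σ)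

/-- Block operator `L₁₁`. -/
noncomputable def opL11 (σ ω c : ℝ) (u : ℝ → ℝ) (y : ℝ) : ℝ :=
  -deriv (deriv u) y + (ω - c ^ 2 / 4) * u y
    + (c * (2 * σ + 1) / 2) * solProfile σ ω c y ^ (2 * σ) * u y
    - ((4 * σ ^ 2 + 6 * σ + 1) / (4 * (σ + 1) ^ 2)) * solProfile σ ω c y ^ (4 * σ) * u y

/-- Block operator `L₂₁`. -/
noncomputable def opL21 (σ ω c : ℝ) (u : ℝ → ℝ) (y : ℝ) : ℝ :=
  -(σ / (σ + 1)) * solProfile σ ω c y ^ (2 * σ - 1) * deriv (solProfile σ ω c) y * u y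
    + (σ / (σ + 1)) * solProfile σ ω c y ^ (2 * σ) * deriv u y

/-- Block operator `L₁₂`. -/
noncomputable def opL12 (σ ω c : ℝ) (u : ℝ → ℝ) (y : ℝ) : ℝ :=
  -((2 * σ + 1) * σ / (σ + 1)) * solProfile σ ω c y ^ (2 * σ - 1) * deriv (solProfile σ ω c) y * u y
    - (σ / (σ + 1)) * solProfile σ ω c y ^ (2 * σ) * deriv u y

/-- Block operator `L₂₂`. -/
noncomputable def opL22 (σ ω c : ℝ) (u : ℝ → ℝ) (y : ℝ) : ℝ :=
  -deriv (deriv u) y + (ω - c ^ 2 / 4) * u y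
    + (c / 2) * solProfile σ ω c y ^ (2 * σ) * u y
    - ((2 * σ + 1) / (4 * (σ + 1) ^ 2)) * solProfile σ ω c y ^ (4 * σ) * u y

/-- The linearized operator in dephased variables:
`H_φ (e^{iθ}(u₁+iu₂)) = e^{iθ}[(L₁₁u₁ + L₂₁u₂) + i(L₁₂u₁ + L₂₂u₂)]`. -/
noncomputable def opHde (σ ω c : ℝ) (u₁ u₂ : ℝ → ℝ) (y : ℝ) : ℂ :=
  Complex.exp (Complex.I * (travPhase σ ω c y : ℂ)) *
    (((opL11 σ ω c u₁ y + opL21 σ ω c u₂ y : ℝ) : ℂ)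
      + Complex.I * ((opL12 σ ω c u₁ y + opL22 σ ω c u₂ y : ℝ) : ℂ))



theorem ode_alg (σ C S s d : ℝ) (hσ : 0 < σ) (hS : S ^ 2 = C ^ 2 - 1)
    (hu : C - d ≠ 0) (hs0 : 0 < s) (r : ℝ) (hr : r ^ 2 = 4 * s ^ 2 - (2*s*d) ^ 2) :
    ((-(σ * r / (2 * σ)) * (C * (σ * r))) * (C - d) - (-(σ * r / (2 * σ)) * S) * (σ * r * S)) / (C - d) ^ 2
      + (-(σ * r / (2 * σ)) * S / (C - d)) ^ 2
    = (s ^ 2 - (2*s*d) ^ 2 / 4) + (2*s*d) / 2 * ((σ + 1) * (4 * s ^ 2 - (2*s*d) ^ 2) / (2 * s) / (C - d))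
      - (2 * σ + 1) / (4 * (σ + 1) ^ 2) * ((σ + 1) * (4 * s ^ 2 - (2*s*d) ^ 2) / (2 * s) / (C - d)) ^ 2 := by
  have hσ1 : σ + 1 ≠ 0 := by positivity
  have hσ0 : σ ≠ 0 := ne_of_gt hσ
  have hs0' : s ≠ 0 := ne_of_gt hs0
  field_simp
  linear_combination (4*(2*σ*(-(C*(C-d))+S^2)+S^2)) * hr
    + (4*(4*s^2-(2*s*d)^2)*(2*σ+1)) * hS

theorem ode_alg' (σ ω c C S : ℝ) (hσ : 0 < σ) (h : c ^ 2 < 4 * ω)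
    (hS : S ^ 2 = C ^ 2 - 1) (hu : C - c / (2 * Real.sqrt ω) ≠ 0) :
    ((-(σ * Real.sqrt (4 * ω - c ^ 2) / (2 * σ)) * (C * (σ * Real.sqrt (4 * ω - c ^ 2)))) * (C - c / (2 * Real.sqrt ω))
        - (-(σ * Real.sqrt (4 * ω - c ^ 2) / (2 * σ)) * S) * (σ * Real.sqrt (4 * ω - c ^ 2) * S)) / (C - c / (2 * Real.sqrt ω)) ^ 2
      + (-(σ * Real.sqrt (4 * ω - c ^ 2) / (2 * σ)) * S / (C - c / (2 * Real.sqrt ω))) ^ 2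
    = (ω - c ^ 2 / 4) + c / 2 * ((σ + 1) * (4 * ω - c ^ 2) / (2 * Real.sqrt ω) / (C - c / (2 * Real.sqrt ω)))
      - (2 * σ + 1) / (4 * (σ + 1) ^ 2) * ((σ + 1) * (4 * ω - c ^ 2) / (2 * Real.sqrt ω) / (C - c / (2 * Real.sqrt ω))) ^ 2 := by
  have hω0 : 0 < ω := by nlinarith [sq_nonneg c]
  set s := Real.sqrt ω with hsdef
  have hs0 : 0 < s := Real.sqrt_pos.mpr hω0
  have hω2 : ω = s ^ 2 := by rw [hsdef, Real.sq_sqrt hω0.le]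
  set r := Real.sqrt (4 * ω - c ^ 2) with hrdef
  have hr2 : r ^ 2 = 4 * ω - c ^ 2 := by rw [hrdef]; exact Real.sq_sqrt (by linarith)
  have hc : 2 * s * (c / (2 * s)) = c := by field_simp
  have key := ode_alg σ C S s (c / (2 * s)) hσ hS hu hs0 r
    (by rw [hr2, hc, hω2])
  rw [hc] at key
  rw [← hω2] at key
  exact key


namespace DNLS
noncomputable def bb (σ ω c : ℝ) : ℝ := σ * Real.sqrt (4 * ω - c ^ 2)
noncomputable def AA (σ ω c : ℝ) : ℝ := (σ + 1) * (4 * ω - c ^ 2) / (2 * Real.sqrt ω)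
noncomputable def uu (σ ω c : ℝ) (y : ℝ) : ℝ :=
  Real.cosh (bb σ ω c * y) - c / (2 * Real.sqrt ω)
noncomputable def phiD (σ ω c : ℝ) (y : ℝ) : ℝ :=
  -(bb σ ω c / (2 * σ)) * Real.sinh (bb σ ω c * y) / uu σ ω c y * solProfile σ ω c y

variable {σ ω c : ℝ}

lemma hω (h : c ^ 2 < 4 * ω) : 0 < ω := by nlinarith [sq_nonneg c]

lemma upos (h : c ^ 2 < 4 * ω) (y : ℝ) : 0 < uu σ ω c y := by
  have hω := hω h
  have hs0 : 0 < Real.sqrt ω := Real.sqrt_pos.mpr hω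
  have hs : Real.sqrt ω ^ 2 = ω := Real.sq_sqrt hω.le
  have hc : c / (2 * Real.sqrt ω) < 1 := by
    rw [div_lt_one (by positivity)]
    nlinarith [sq_nonneg (c - 2 * Real.sqrt ω)]
  have := Real.one_le_cosh (bb σ ω c * y)
  unfold uu; linarith

lemma AApos (h : c ^ 2 < 4 * ω) (hσ : 0 < σ) : 0 < AA σ ω c := by
  have hω := hω h
  have hs0 : 0 < Real.sqrt ω := Real.sqrt_pos.mpr hω
  have : 0 < 4 * ω - c ^ 2 := by linarith
  unfold AA; positivity

lemma phi_eq : solProfile σ ω c = fun y => (AA σ ω c / uu σ ω c y) ^ (1 / (2 * σ)) := by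
  funext y
  unfold solProfile AA uu bb
  rw [div_div]

lemma phi_pos (h : c ^ 2 < 4 * ω) (hσ : 0 < σ) (y : ℝ) : 0 < solProfile σ ω c y := by
  rw [phi_eq]
  exact Real.rpow_pos_of_pos (div_pos (AApos h hσ) (upos h y)) _

lemma pow2σ (h : c ^ 2 < 4 * ω) (hσ : 0 < σ) (y : ℝ) :
    solProfile σ ω c y ^ (2 * σ) = AA σ ω c / uu σ ω c y := by
  rw [phi_eq, ← Real.rpow_mul (le_of_lt (div_pos (AApos h hσ) (upos h y))),
    one_div, inv_mul_cancel₀ (by positivity), Real.rpow_one]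

lemma hasDerivAt_uu (y : ℝ) :
    HasDerivAt (uu σ ω c) (bb σ ω c * Real.sinh (bb σ ω c * y)) y := by
  have h1 : HasDerivAt (fun s : ℝ => bb σ ω c * s) (bb σ ω c) y := by
    simpa using (hasDerivAt_id y).const_mul (bb σ ω c)
  have := (h1.cosh).sub_const (c / (2 * Real.sqrt ω))
  unfold uu
  exact this.congr_deriv (by ring)

lemma hasDerivAt_inner (h : c ^ 2 < 4 * ω) (hσ : 0 < σ) (y : ℝ) :
    HasDerivAt (fun s => AA σ ω c / uu σ ω c s)
      (-(AA σ ω c * (bb σ ω c * Real.sinh (bb σ ω c * y))) / uu σ ω c y ^ 2) y := by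
  have := (hasDerivAt_const y (AA σ ω c)).div (hasDerivAt_uu (σ := σ) y) (ne_of_gt (upos h y))
  exact this.congr_deriv (by ring)

lemma hasDerivAt_phi (h : c ^ 2 < 4 * ω) (hσ : 0 < σ) (y : ℝ) :
    HasDerivAt (solProfile σ ω c) (phiD σ ω c y) y := by
  have hA := AApos h hσ
  have hu := upos h (σ := σ) y
  have hpos : 0 < AA σ ω c / uu σ ω c y := div_pos hA hu
  have h1 := (hasDerivAt_inner h hσ y).rpow_const (p := 1 / (2 * σ)) (Or.inl (ne_of_gt hpos))
  rw [phi_eq]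
  convert h1 using 1
  rw [Real.rpow_sub hpos, Real.rpow_one]
  unfold phiD
  rw [phi_eq]
  field_simp

lemma ode_val (h : c ^ 2 < 4 * ω) (hσ : 0 < σ) (y : ℝ) :
    (-(bb σ ω c / (2 * σ)) * (Real.cosh (bb σ ω c * y) * bb σ ω c) * uu σ ω c y
        - -(bb σ ω c / (2 * σ)) * Real.sinh (bb σ ω c * y) * (bb σ ω c * Real.sinh (bb σ ω c * y)))
        / uu σ ω c y ^ 2 * solProfile σ ω c y
      + -(bb σ ω c / (2 * σ)) * Real.sinh (bb σ ω c * y) / uu σ ω c y * phiD σ ω c y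
    = (ω - c ^ 2 / 4) * solProfile σ ω c y
      + c / 2 * solProfile σ ω c y ^ (2 * σ) * solProfile σ ω c y
      - (2 * σ + 1) / (4 * (σ + 1) ^ 2) * (solProfile σ ω c y ^ (2 * σ)) ^ 2 * solProfile σ ω c y := by
  have hu := upos (σ := σ) h y
  have key := ode_alg' σ ω c (Real.cosh (bb σ ω c * y)) (Real.sinh (bb σ ω c * y)) hσ h
    (Real.sinh_sq _) (by unfold uu at hu; exact ne_of_gt hu)
  rw [pow2σ h hσ]
  unfold phiD uu bb AA
  unfold uu bb at key
  linear_combination (solProfile σ ω c y) * key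

lemma hasDerivAt_phiD (h : c ^ 2 < 4 * ω) (hσ : 0 < σ) (y : ℝ) :
    HasDerivAt (phiD σ ω c)
      ((ω - c ^ 2 / 4) * solProfile σ ω c y
        + c / 2 * solProfile σ ω c y ^ (2 * σ) * solProfile σ ω c y
        - (2 * σ + 1) / (4 * (σ + 1) ^ 2) * (solProfile σ ω c y ^ (2 * σ)) ^ 2 * solProfile σ ω c y) y := by
  have hb : HasDerivAt (fun s : ℝ => bb σ ω c * s) (bb σ ω c) y := by
    simpa using (hasDerivAt_id y).const_mul (bb σ ω c)
  have hnum : HasDerivAt (fun s : ℝ => -(bb σ ω c / (2 * σ)) * Real.sinh (bb σ ω c * s))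
      (-(bb σ ω c / (2 * σ)) * (Real.cosh (bb σ ω c * y) * bb σ ω c)) y :=
    (hb.sinh).const_mul _
  have hQ := hnum.div (hasDerivAt_uu (σ := σ) y) (ne_of_gt (upos h y))
  have hmul := hQ.mul (hasDerivAt_phi h hσ y)
  simp only [Pi.div_apply] at hmul
  rw [ode_val h hσ y] at hmul
  exact hmul

end DNLS

set_option maxHeartbeats 2000000 in
open DNLS in
theorem chi1_in_kernel (σ ω c : ℝ) (hσ : 0 < σ) (h : c ^ 2 < 4 * ω) (k₂ : ℝ) :
    (∀ y : ℝ,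
        opL11 σ ω c (deriv (solProfile σ ω c)) y
          + opL21 σ ω c
              (fun s => (k₂ - solProfile σ ω c s ^ (2 * σ) / (2 * σ + 2)) * solProfile σ ω c s)
              y = 0) ∧
    (∀ y : ℝ,
        opL12 σ ω c (deriv (solProfile σ ω c)) y
          + opL22 σ ω c
              (fun s => (k₂ - solProfile σ ω c s ^ (2 * σ) / (2 * σ + 2)) * solProfile σ ω c s)
              y = 0) ∧
    (∀ y : ℝ,
        opHde σ ω c (deriv (solProfile σ ω c))
            (fun s => (k₂ - solProfile σ ω c s ^ (2 * σ) / (2 * σ + 2)) * solProfile σ ω c s)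
            y = 0) := by
  have hp : ∀ z, (0:ℝ) < solProfile σ ω c z := phi_pos h hσ
  have hne : ∀ z, solProfile σ ω c z ≠ 0 := fun z => ne_of_gt (hp z)
  have hφ : ∀ z, HasDerivAt (solProfile σ ω c) (phiD σ ω c z) z := hasDerivAt_phi h hσ
  have hd1 : deriv (solProfile σ ω c) = phiD σ ω c := funext fun z => (hφ z).deriv
  have hΦ2fun : deriv (phiD σ ω c) = fun z =>
      (ω - c ^ 2 / 4) * solProfile σ ω c z
        + c / 2 * solProfile σ ω c z ^ (2 * σ) * solProfile σ ω c z
        - (2 * σ + 1) / (4 * (σ + 1) ^ 2) * (solProfile σ ω c z ^ (2 * σ)) ^ 2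
            * solProfile σ ω c z :=
    funext fun z => (hasDerivAt_phiD h hσ z).deriv
  have hΦ2' : ∀ z, HasDerivAt (fun z =>
      (ω - c ^ 2 / 4) * solProfile σ ω c z
        + c / 2 * solProfile σ ω c z ^ (2 * σ) * solProfile σ ω c z
        - (2 * σ + 1) / (4 * (σ + 1) ^ 2) * (solProfile σ ω c z ^ (2 * σ)) ^ 2
            * solProfile σ ω c z) _ z := fun z =>
    (((hφ z).const_mul (ω - c ^ 2 / 4)).add
      ((((hφ z).rpow_const (Or.inl (hne z))).const_mul (c / 2)).mul (hφ z))).sub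
      (((((hφ z).rpow_const (Or.inl (hne z))).pow 2).const_mul
          ((2 * σ + 1) / (4 * (σ + 1) ^ 2))).mul (hφ z))
  have hv : ∀ z, HasDerivAt
      (fun s => (k₂ - solProfile σ ω c s ^ (2 * σ) / (2 * σ + 2)) * solProfile σ ω c s) _ z :=
    fun z =>
    (((hasDerivAt_const z k₂).sub
        (((hφ z).rpow_const (Or.inl (hne z))).div_const (2 * σ + 2))).mul (hφ z))
  have hdv : deriv
      (fun s => (k₂ - solProfile σ ω c s ^ (2 * σ) / (2 * σ + 2)) * solProfile σ ω c s)
      = fun z => (0 - phiD σ ω c z * (2 * σ) * solProfile σ ω c z ^ (2 * σ - 1) / (2 * σ + 2))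
            * solProfile σ ω c z
          + (k₂ - solProfile σ ω c z ^ (2 * σ) / (2 * σ + 2)) * phiD σ ω c z := by
    funext z
    rw [(hv z).deriv]
    simp only [Pi.sub_apply]
  have hvD : ∀ z, HasDerivAt
      (fun z => (0 - phiD σ ω c z * (2 * σ) * solProfile σ ω c z ^ (2 * σ - 1) / (2 * σ + 2))
            * solProfile σ ω c z
          + (k₂ - solProfile σ ω c z ^ (2 * σ) / (2 * σ + 2)) * phiD σ ω c z) _ z := fun z =>
    ((((hasDerivAt_const z (0:ℝ)).sub
        ((((hasDerivAt_phiD h hσ z).mul_const (2 * σ)).mul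
          ((hφ z).rpow_const (Or.inl (hne z)))).div_const (2 * σ + 2))).mul (hφ z)).add
      (((hasDerivAt_const z k₂).sub
        (((hφ z).rpow_const (Or.inl (hne z))).div_const (2 * σ + 2))).mul
        (hasDerivAt_phiD h hσ z)))
  have e1 : ∀ z, solProfile σ ω c z ^ (2 * σ - 1)
      = solProfile σ ω c z ^ (2 * σ) / solProfile σ ω c z := fun z => by
    rw [Real.rpow_sub (hp z), Real.rpow_one]
  have e2 : ∀ z, solProfile σ ω c z ^ (2 * σ - 1 - 1)
      = solProfile σ ω c z ^ (2 * σ) / solProfile σ ω c z / solProfile σ ω c z := fun z => by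
    rw [Real.rpow_sub (hp z), Real.rpow_sub (hp z), Real.rpow_one]
  have e3 : ∀ z, solProfile σ ω c z ^ (4 * σ) = (solProfile σ ω c z ^ (2 * σ)) ^ (2:ℕ) := fun z => by
    rw [show (4:ℝ) * σ = 2 * σ * (2:ℕ) by (push_cast; ring), Real.rpow_mul (hp z).le,
      Real.rpow_natCast]
  have eB : ∀ z, solProfile σ ω c z ^ (2 * σ - 1)
      = solProfile σ ω c z ^ (2 * σ - 1 - 1) * solProfile σ ω c z := fun z => by
    conv_lhs => rw [show (2*σ-1 : ℝ) = (2*σ-1-1) + 1 by ring]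
    rw [Real.rpow_add (hp z), Real.rpow_one]
  have eA : ∀ z, solProfile σ ω c z ^ (2 * σ)
      = solProfile σ ω c z ^ (2 * σ - 1 - 1) * solProfile σ ω c z * solProfile σ ω c z := fun z => by
    conv_lhs => rw [show (2*σ : ℝ) = (2*σ-1-1) + 1 + 1 by ring]
    rw [Real.rpow_add (hp z), Real.rpow_add (hp z), Real.rpow_one]
  have hσ1 : σ + 1 ≠ 0 := by positivity
  have h2σ2 : 2 * σ + 2 ≠ 0 := by positivity
  have P1 : ∀ y : ℝ,
      opL11 σ ω c (deriv (solProfile σ ω c)) y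
        + opL21 σ ω c
            (fun s => (k₂ - solProfile σ ω c s ^ (2 * σ) / (2 * σ + 2)) * solProfile σ ω c s)
            y = 0 := by
    intro y
    simp only [opL11, opL21]
    rw [hd1, hΦ2fun, (hΦ2' y).deriv, (hv y).deriv]
    beta_reduce
    simp only [Pi.add_apply, Pi.sub_apply, Pi.mul_apply, Pi.div_apply, Pi.pow_apply]
    simp only [e3]
    simp only [eA, eB]
    push_cast
    field_simp [hσ1, h2σ2]
    ring
  have P2 : ∀ y : ℝ,
      opL12 σ ω c (deriv (solProfile σ ω c)) y
        + opL22 σ ω c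
            (fun s => (k₂ - solProfile σ ω c s ^ (2 * σ) / (2 * σ + 2)) * solProfile σ ω c s)
            y = 0 := by
    intro y
    simp only [opL12, opL22]
    rw [hd1, hΦ2fun, hdv, (hvD y).deriv]
    beta_reduce
    simp only [Pi.add_apply, Pi.sub_apply, Pi.mul_apply, Pi.div_apply, Pi.pow_apply]
    simp only [e3]
    simp only [eA, eB]
    push_cast
    field_simp [hσ1, h2σ2]
    ring
  refine ⟨P1, P2, fun y => ?_⟩
  simp only [opHde, P1 y, P2 y]
  simp
end

section
/- Let σ > 0 and ω, c real with 4ω > c². Set κ = √(4ω−c²), f = (σ+1)κ²/(2√ω), h(x) = cosh(σκx) − c/(2√ω), α_n = ∫_0^∞ h(x)^{−1/σ−n} dx, and let φ = φ_{ω,c} be the solitary profile, θ = θ_{ω,c} the traveling phase, and Φ = φ e^{iθ}. Then the momentum of the soliton satisfies P(Φ) = −(1/2) Im ∫_ℝ \bar{Φ}(y) Φ'(y) dy = −(c/2) f^{1/σ} α₀ + (1/(2σ+2)) f^{(σ+1)/σ} α₁. -/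
open Real MeasureTheory

/-- The complex soliton profile `Φ = φ e^{iθ}`. -/
noncomputable def solComplex (σ ω c : ℝ) (y : ℝ) : ℂ :=
  (solProfile σ ω c y : ℂ) * Complex.exp (Complex.I * (travPhase σ ω c y : ℂ))

noncomputable def solK (σ ω c : ℝ) : ℝ := σ * Real.sqrt (4 * ω - c ^ 2)
noncomputable def solA (ω c : ℝ) : ℝ := c / (2 * Real.sqrt ω)
noncomputable def solH (σ ω c x : ℝ) : ℝ := Real.cosh (solK σ ω c * x) - solA ω c
noncomputable def solF (σ ω c : ℝ) : ℝ :=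
  (σ + 1) * Real.sqrt (4 * ω - c ^ 2) ^ 2 / (2 * Real.sqrt ω)

variable {σ ω c : ℝ}

lemma omega_pos (h : c ^ 2 < 4 * ω) : 0 < ω := by nlinarith [sq_nonneg c]

lemma sqrt_omega_pos (h : c ^ 2 < 4 * ω) : 0 < Real.sqrt ω :=
  Real.sqrt_pos.2 (omega_pos h)

lemma kappa_pos (h : c ^ 2 < 4 * ω) : 0 < Real.sqrt (4 * ω - c ^ 2) :=
  Real.sqrt_pos.2 (by linarith)

lemma solK_pos (hσ : 0 < σ) (h : c ^ 2 < 4 * ω) : 0 < solK σ ω c :=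
  mul_pos hσ (kappa_pos h)

lemma solA_abs_lt (h : c ^ 2 < 4 * ω) : |solA ω c| < 1 := by
  have hs : (0:ℝ) < 2 * Real.sqrt ω := by
    have := sqrt_omega_pos h; linarith
  have hsq : c ^ 2 < (2 * Real.sqrt ω) ^ 2 := by
    rw [mul_pow, Real.sq_sqrt (omega_pos h).le]; linarith
  have hc : |c| < 2 * Real.sqrt ω := by
    nlinarith [sq_abs c, abs_nonneg c]
  rw [solA, abs_div, abs_of_pos hs, div_lt_one hs]
  exact hc

lemma solH_ge (h : c ^ 2 < 4 * ω) (x : ℝ) :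
    (1 - |solA ω c|) * Real.cosh (solK σ ω c * x) ≤ solH σ ω c x := by
  have h1 : (1:ℝ) ≤ Real.cosh (solK σ ω c * x) := Real.one_le_cosh _
  have h2 : solA ω c ≤ |solA ω c| := le_abs_self _
  have h3 : 0 ≤ |solA ω c| := abs_nonneg _
  unfold solH
  nlinarith

lemma solH_pos (h : c ^ 2 < 4 * ω) (x : ℝ) : 0 < solH σ ω c x :=
  lt_of_lt_of_le
    (mul_pos (by have := solA_abs_lt (c := c) h; linarith) (Real.cosh_pos _))
    (solH_ge h x)

lemma solF_pos (hσ : 0 < σ) (h : c ^ 2 < 4 * ω) : 0 < solF σ ω c := by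
  have h1 := kappa_pos h
  have h2 := sqrt_omega_pos h
  unfold solF
  positivity

lemma solH_cont : Continuous (solH σ ω c) := by
  unfold solH; fun_prop

lemma solH_hasDerivAt (x : ℝ) :
    HasDerivAt (solH σ ω c) (Real.sinh (solK σ ω c * x) * solK σ ω c) x := by
  have h1 : HasDerivAt (fun x : ℝ => solK σ ω c * x) (solK σ ω c) x := by
    simpa using (hasDerivAt_id x).const_mul (solK σ ω c)
  have h2 := (Real.hasDerivAt_cosh (solK σ ω c * x)).comp x h1
  exact h2.sub_const (solA ω c)

lemma solProfile_eq (h : c ^ 2 < 4 * ω) (y : ℝ) :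
    solProfile σ ω c y = (solF σ ω c / solH σ ω c y) ^ (1 / (2 * σ)) := by
  unfold solProfile solF solH solK solA
  rw [Real.sq_sqrt (by linarith [sq_nonneg c] : (0:ℝ) ≤ 4 * ω - c ^ 2), div_div]

lemma solProfile_pos (hσ : 0 < σ) (h : c ^ 2 < 4 * ω) (y : ℝ) :
    0 < solProfile σ ω c y := by
  rw [solProfile_eq h]
  exact Real.rpow_pos_of_pos (div_pos (solF_pos hσ h) (solH_pos h y)) _

lemma solProfile_rpow (hσ : 0 < σ) (h : c ^ 2 < 4 * ω) (p y : ℝ) :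
    solProfile σ ω c y ^ p
      = solF σ ω c ^ (p / (2 * σ)) * solH σ ω c y ^ (-(p / (2 * σ))) := by
  have hF := solF_pos hσ h
  have hH := solH_pos (σ := σ) h y
  rw [solProfile_eq h, ← Real.rpow_mul (div_pos hF hH).le,
    Real.div_rpow hF.le hH.le, div_eq_mul_inv, ← Real.rpow_neg hH.le]
  ring_nf

lemma solProfile_exp_form (hσ : 0 < σ) (h : c ^ 2 < 4 * ω) :
    solProfile σ ω c = fun y =>
      Real.exp ((1 / (2 * σ)) * (Real.log (solF σ ω c) - Real.log (solH σ ω c y))) := by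
  funext y
  have hF := solF_pos hσ h
  have hH := solH_pos (σ := σ) h y
  rw [solProfile_eq h, Real.rpow_def_of_pos (div_pos hF hH),
    Real.log_div hF.ne' hH.ne']
  ring_nf

lemma solProfile_hasDerivAt (hσ : 0 < σ) (h : c ^ 2 < 4 * ω) (y : ℝ) :
    HasDerivAt (solProfile σ ω c)
      (solProfile σ ω c y *
        (-(Real.sinh (solK σ ω c * y) * solK σ ω c) / (2 * σ * solH σ ω c y))) y := by
  have hH := solH_pos (σ := σ) h y
  have hlog : HasDerivAt (fun y => Real.log (solH σ ω c y))
      (Real.sinh (solK σ ω c * y) * solK σ ω c / solH σ ω c y) y :=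
    (solH_hasDerivAt y).log hH.ne'
  have hg : HasDerivAt
      (fun y => (1 / (2 * σ)) * (Real.log (solF σ ω c) - Real.log (solH σ ω c y)))
      ((1 / (2 * σ)) * (-(Real.sinh (solK σ ω c * y) * solK σ ω c / solH σ ω c y))) y :=
    (hlog.const_sub _).const_mul _
  have := hg.exp
  rw [← solProfile_exp_form hσ h] at this
  have hval : Real.exp ((1 / (2 * σ)) * (Real.log (solF σ ω c) - Real.log (solH σ ω c y)))
      = solProfile σ ω c y := by rw [solProfile_exp_form hσ h]
  rw [hval] at this
  convert this using 1
  field_simp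

lemma solProfile_cont (hσ : 0 < σ) (h : c ^ 2 < 4 * ω) :
    Continuous (solProfile σ ω c) := by
  rw [solProfile_exp_form hσ h]
  have : Continuous fun y => Real.log (solH σ ω c y) :=
    solH_cont.log (fun y => (solH_pos h y).ne')
  fun_prop

lemma sinh_le_cosh' (t : ℝ) : |Real.sinh t| ≤ Real.cosh t := by
  rw [Real.abs_sinh, ← Real.cosh_abs]
  rw [Real.sinh_eq, Real.cosh_eq]
  have := Real.exp_pos (-|t|)
  linarith

lemma solH_rpow_integrable (hσ : 0 < σ) (h : c ^ 2 < 4 * ω) {p : ℝ} (hp : 0 < p) :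
    Integrable (fun x => solH σ ω c x ^ (-p)) := by
  set K := solK σ ω c with hK
  have hKpos := solK_pos hσ h
  have hA := solA_abs_lt (c := c) h
  set D : ℝ := (1 - |solA ω c|) / 2 with hD
  have hDpos : 0 < D := by rw [hD]; linarith
  have hHD : ∀ x : ℝ, D * Real.exp (K * x) ≤ solH σ ω c x := by
    intro x
    have h1 : Real.exp (K * x) / 2 ≤ Real.cosh (K * x) := by
      rw [Real.cosh_eq]
      have := Real.exp_pos (-(K * x))
      linarith
    have h2 := solH_ge (σ := σ) h x
    have h3 : 0 ≤ 1 - |solA ω c| := by linarith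
    calc D * Real.exp (K * x) = (1 - |solA ω c|) * (Real.exp (K * x) / 2) := by
          rw [hD]; ring
      _ ≤ (1 - |solA ω c|) * Real.cosh (K * x) := by
          exact mul_le_mul_of_nonneg_left h1 h3
      _ ≤ solH σ ω c x := h2
  have hcont : Continuous (fun x => solH σ ω c x ^ (-p)) :=
    solH_cont.rpow_const (fun x => Or.inl (solH_pos h x).ne')
  have hbound : ∀ x : ℝ, ‖solH σ ω c x ^ (-p)‖
      ≤ D ^ (-p) * Real.exp (-(p * K) * x) := by
    intro x
    have hHpos := solH_pos (σ := σ) h x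
    rw [Real.norm_eq_abs, abs_of_pos (Real.rpow_pos_of_pos hHpos _)]
    have h1 : (D * Real.exp (K * x)) ^ (-p) ≤ solH σ ω c x ^ (-p) → False → True := fun _ _ => trivial
    have h2 : solH σ ω c x ^ (-p) ≤ (D * Real.exp (K * x)) ^ (-p) :=
      Real.rpow_le_rpow_of_nonpos (by positivity) (hHD x) (by linarith)
    have h3 : (D * Real.exp (K * x)) ^ (-p) = D ^ (-p) * Real.exp (-(p * K) * x) := by
      rw [Real.mul_rpow hDpos.le (Real.exp_pos _).le]
      congr 1
      rw [← Real.exp_mul]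
      ring_nf
    rw [← h3]; exact h2
  refine hcont.locallyIntegrable.integrable_of_isBigO_atTop_of_norm_isNegInvariant
      (g := fun x => Real.exp (-(p * K) * x)) ?_ ?_ ?_
  · filter_upwards [] with x
    simp only [Function.comp]
    rw [Real.norm_eq_abs, Real.norm_eq_abs]
    unfold solH
    rw [mul_neg, Real.cosh_neg]
  · refine Asymptotics.IsBigO.of_bound (D ^ (-p)) ?_
    filter_upwards [] with x
    rw [Real.norm_eq_abs (Real.exp _), abs_of_pos (Real.exp_pos _)]
    exact hbound x
  · exact ⟨Set.Ioi 0, Filter.Ioi_mem_atTop 0,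
      exp_neg_integrableOn_Ioi 0 (by positivity : (0:ℝ) < p * K)⟩

noncomputable def solD1 (σ ω c y : ℝ) : ℝ :=
  solProfile σ ω c y *
    (-(Real.sinh (solK σ ω c * y) * solK σ ω c) / (2 * σ * solH σ ω c y))

noncomputable def solD2 (σ ω c y : ℝ) : ℝ :=
  c / 2 - (1 / (2 * σ + 2)) * solProfile σ ω c y ^ (2 * σ)

lemma solProfile_two_sigma (hσ : 0 < σ) (h : c ^ 2 < 4 * ω) (y : ℝ) :
    solProfile σ ω c y ^ (2 * σ) = solF σ ω c * solH σ ω c y ^ (-(1:ℝ)) := by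
  rw [solProfile_rpow hσ h]
  rw [div_self (by positivity : 2 * σ ≠ 0), Real.rpow_one]

lemma G_eq (hσ : 0 < σ) (h : c ^ 2 < 4 * ω) :
    (fun η => solProfile σ ω c η ^ (2 * σ))
      = fun η => solF σ ω c * solH σ ω c η ^ (-(1:ℝ)) :=
  funext (solProfile_two_sigma hσ h)

lemma G_integrable (hσ : 0 < σ) (h : c ^ 2 < 4 * ω) :
    Integrable (fun η => solProfile σ ω c η ^ (2 * σ)) := by
  rw [G_eq hσ h]
  exact (solH_rpow_integrable hσ h one_pos).const_mul _

lemma G_cont (hσ : 0 < σ) (h : c ^ 2 < 4 * ω) :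
    Continuous (fun η => solProfile σ ω c η ^ (2 * σ)) := by
  rw [G_eq hσ h]
  exact continuous_const.mul (solH_cont.rpow_const (fun x => Or.inl (solH_pos h x).ne'))

lemma travPhase_hasDerivAt (hσ : 0 < σ) (h : c ^ 2 < 4 * ω) (y : ℝ) :
    HasDerivAt (travPhase σ ω c) (solD2 σ ω c y) y := by
  have hGint := G_integrable hσ h
  have hGcont := G_cont hσ h
  have hrw : travPhase σ ω c = fun y =>
      c / 2 * y - (1 / (2 * σ + 2)) *
        ((∫ η in Set.Iic (0:ℝ), solProfile σ ω c η ^ (2 * σ)) +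
          ∫ η in (0:ℝ)..y, solProfile σ ω c η ^ (2 * σ)) := by
    funext z
    unfold travPhase
    have h2 : (∫ η in Set.Iio z, solProfile σ ω c η ^ (2 * σ))
        = (∫ η in Set.Iic (0:ℝ), solProfile σ ω c η ^ (2 * σ)) +
          ∫ η in (0:ℝ)..z, solProfile σ ω c η ^ (2 * σ) := by
      have h3 := intervalIntegral.integral_Iic_sub_Iic
        (hGint.integrableOn (s := Set.Iic (0:ℝ))) (hGint.integrableOn (s := Set.Iic z))
      rw [← integral_Iic_eq_integral_Iio]
      linarith
    rw [h2]
  rw [hrw]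
  have hFTC : HasDerivAt (fun u => ∫ η in (0:ℝ)..u, solProfile σ ω c η ^ (2 * σ))
      (solProfile σ ω c y ^ (2 * σ)) y :=
    intervalIntegral.integral_hasDerivAt_right hGint.intervalIntegrable
      (hGcont.stronglyMeasurableAtFilter _ _) hGcont.continuousAt
  have h5 := ((hFTC.const_add
      (∫ η in Set.Iic (0:ℝ), solProfile σ ω c η ^ (2 * σ))).const_mul (1 / (2 * σ + 2)))
  have h6 := ((hasDerivAt_id y).const_mul (c / 2)).sub h5
  unfold solD2
  refine h6.congr_deriv ?_
  ring

lemma solComplex_hasDerivAt (hσ : 0 < σ) (h : c ^ 2 < 4 * ω) (y : ℝ) :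
    HasDerivAt (solComplex σ ω c)
      (((solD1 σ ω c y : ℂ) + (solProfile σ ω c y : ℂ) * (Complex.I * (solD2 σ ω c y : ℂ)))
        * Complex.exp (Complex.I * (travPhase σ ω c y : ℂ))) y := by
  have hφ := (solProfile_hasDerivAt hσ h y).ofReal_comp
  have hθ := (travPhase_hasDerivAt hσ h y).ofReal_comp
  have hiθ := hθ.const_mul Complex.I
  have hexp := hiθ.cexp
  have := hφ.mul hexp
  unfold solComplex solD1
  refine this.congr_deriv ?_
  push_cast
  ring

lemma integrand_eq (hσ : 0 < σ) (h : c ^ 2 < 4 * ω) (y : ℝ) :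
    (starRingEnd ℂ) (solComplex σ ω c y) * deriv (solComplex σ ω c) y
      = ((solProfile σ ω c y * solD1 σ ω c y : ℝ) : ℂ)
        + ((solProfile σ ω c y ^ 2 * solD2 σ ω c y : ℝ) : ℂ) * Complex.I := by
  rw [(solComplex_hasDerivAt hσ h y).deriv]
  unfold solComplex
  set φ : ℝ := solProfile σ ω c y
  set θ : ℝ := travPhase σ ω c y
  rw [map_mul, Complex.conj_ofReal, ← Complex.exp_conj]
  have hconj : (starRingEnd ℂ) (Complex.I * (θ : ℂ)) = -(Complex.I * (θ : ℂ)) := by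
    rw [map_mul, Complex.conj_I, Complex.conj_ofReal]
    ring
  rw [hconj]
  have hexp : Complex.exp (-(Complex.I * (θ : ℂ))) * Complex.exp (Complex.I * (θ : ℂ)) = 1 := by
    rw [← Complex.exp_add]
    simp
  calc ((φ : ℂ) * Complex.exp (-(Complex.I * (θ : ℂ)))) *
        ((((solD1 σ ω c y : ℂ)) + (φ : ℂ) * (Complex.I * (solD2 σ ω c y : ℂ)))
          * Complex.exp (Complex.I * (θ : ℂ)))
      = (Complex.exp (-(Complex.I * (θ : ℂ))) * Complex.exp (Complex.I * (θ : ℂ))) *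
          (((φ * solD1 σ ω c y : ℝ) : ℂ) + ((φ ^ 2 * solD2 σ ω c y : ℝ) : ℂ) * Complex.I) := by
        push_cast
        ring
    _ = _ := by rw [hexp, one_mul]

lemma solProfile_sq (hσ : 0 < σ) (h : c ^ 2 < 4 * ω) (y : ℝ) :
    solProfile σ ω c y ^ 2
      = solF σ ω c ^ (1 / σ) * solH σ ω c y ^ (-(1 / σ)) := by
  have h1 := solProfile_rpow hσ h 2 y
  rw [Real.rpow_two] at h1
  rw [h1]
  have h2 : (2:ℝ) / (2 * σ) = 1 / σ := by
    field_simp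
  rw [h2]

lemma solProfile_sq_D2 (hσ : 0 < σ) (h : c ^ 2 < 4 * ω) (y : ℝ) :
    solProfile σ ω c y ^ 2 * solD2 σ ω c y
      = (c / 2 * solF σ ω c ^ (1 / σ)) * solH σ ω c y ^ (-(1 / σ))
        - (1 / (2 * σ + 2) * solF σ ω c ^ ((σ + 1) / σ)) * solH σ ω c y ^ (-(1 / σ) - 1) := by
  have hF := solF_pos hσ h
  have hH := solH_pos (σ := σ) h y
  unfold solD2
  rw [mul_sub, solProfile_sq hσ h, solProfile_two_sigma hσ h]
  have e1 : (σ + 1) / σ = 1 / σ + 1 := by field_simp; ring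
  have hFe : solF σ ω c ^ ((σ + 1) / σ) = solF σ ω c ^ (1 / σ) * solF σ ω c := by
    rw [e1, Real.rpow_add hF, Real.rpow_one]
  have e2 : -(1 / σ) - 1 = -(1 / σ) + (-1 : ℝ) := by ring
  have hHe : solH σ ω c y ^ (-(1 / σ) - 1)
      = solH σ ω c y ^ (-(1 / σ)) * solH σ ω c y ^ (-(1:ℝ)) := by
    rw [e2, Real.rpow_add hH]
  rw [hFe, hHe]
  ring

lemma solH_rpow_integrable' (hσ : 0 < σ) (h : c ^ 2 < 4 * ω) :
    Integrable (fun x => solH σ ω c x ^ (-(1 / σ) - 1)) := by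
  have he : ∀ x : ℝ, solH σ ω c x ^ (-(1 / σ) - 1) = solH σ ω c x ^ (-(1 / σ + 1)) := by
    intro x; congr 1; ring
  rw [funext he]
  exact solH_rpow_integrable hσ h (by positivity)

lemma phi_sq_D2_integrable (hσ : 0 < σ) (h : c ^ 2 < 4 * ω) :
    Integrable (fun y => solProfile σ ω c y ^ 2 * solD2 σ ω c y) := by
  rw [funext (solProfile_sq_D2 hσ h)]
  exact ((solH_rpow_integrable hσ h (by positivity : (0:ℝ) < 1 / σ)).const_mul _).sub
    ((solH_rpow_integrable' hσ h).const_mul _)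

lemma phi_D1_integrable (hσ : 0 < σ) (h : c ^ 2 < 4 * ω) :
    Integrable (fun y => solProfile σ ω c y * solD1 σ ω c y) := by
  have hA := solA_abs_lt (c := c) h
  have hA1 : 0 < 1 - |solA ω c| := by linarith
  have hK := solK_pos hσ h
  set C : ℝ := solF σ ω c ^ (1 / σ) * (solK σ ω c / (2 * σ * (1 - |solA ω c|))) with hC
  apply Integrable.mono'
    ((solH_rpow_integrable hσ h (by positivity : (0:ℝ) < 1 / σ)).const_mul C)
  · have hφc := solProfile_cont hσ h
    have hden : Continuous fun y => 2 * σ * solH σ ω c y := continuous_const.mul solH_cont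
    have hnum : Continuous fun y => -(Real.sinh (solK σ ω c * y) * solK σ ω c) := by
      fun_prop
    have hq : Continuous fun y =>
        -(Real.sinh (solK σ ω c * y) * solK σ ω c) / (2 * σ * solH σ ω c y) :=
      hnum.div hden (fun y => by
        have := solH_pos (σ := σ) h y; positivity)
    exact (hφc.mul (hφc.mul hq)).aestronglyMeasurable
  · filter_upwards [] with y
    have hHpos := solH_pos (σ := σ) h y
    have hφpos := solProfile_pos hσ h y
    have hq : |(-(Real.sinh (solK σ ω c * y) * solK σ ω c)) / (2 * σ * solH σ ω c y)|
        ≤ solK σ ω c / (2 * σ * (1 - |solA ω c|)) := by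
      rw [abs_div, abs_of_pos (by positivity : (0:ℝ) < 2 * σ * solH σ ω c y), abs_neg,
        abs_mul, abs_of_pos hK, div_le_div_iff₀ (by positivity) (by positivity)]
      have hsc := sinh_le_cosh' (solK σ ω c * y)
      have hHg := solH_ge (σ := σ) h y
      have key : (1 - |solA ω c|) * |Real.sinh (solK σ ω c * y)| ≤ solH σ ω c y :=
        le_trans (mul_le_mul_of_nonneg_left hsc hA1.le) hHg
      nlinarith [mul_le_mul_of_nonneg_left key
        (by positivity : (0:ℝ) ≤ solK σ ω c * (2 * σ))]
    calc ‖solProfile σ ω c y * solD1 σ ω c y‖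
        = solProfile σ ω c y ^ 2 *
            |(-(Real.sinh (solK σ ω c * y) * solK σ ω c)) / (2 * σ * solH σ ω c y)| := by
          rw [Real.norm_eq_abs]
          unfold solD1
          rw [← mul_assoc, abs_mul, abs_mul, abs_of_pos hφpos]
          ring
      _ ≤ solProfile σ ω c y ^ 2 * (solK σ ω c / (2 * σ * (1 - |solA ω c|))) :=
          mul_le_mul_of_nonneg_left hq (sq_nonneg _)
      _ = C * solH σ ω c y ^ (-(1 / σ)) := by
          rw [solProfile_sq hσ h, hC]; ring

lemma integral_solH_rpow (e : ℝ) :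
    (∫ x, solH σ ω c x ^ e)
      = 2 * ∫ x in Set.Ioi (0:ℝ),
          (Real.cosh (σ * Real.sqrt (4 * ω - c ^ 2) * x) - c / (2 * Real.sqrt ω)) ^ e := by
  have hptw : ∀ x : ℝ, solH σ ω c x ^ e
      = (fun t => (Real.cosh (σ * Real.sqrt (4 * ω - c ^ 2) * t)
          - c / (2 * Real.sqrt ω)) ^ e) |x| := by
    intro x
    simp only
    unfold solH solK solA
    have habs : abs (σ * Real.sqrt (4 * ω - c ^ 2) * abs x)
        = abs (σ * Real.sqrt (4 * ω - c ^ 2) * x) := by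
      rw [abs_mul, abs_abs, ← abs_mul]
    rw [← Real.cosh_abs (σ * Real.sqrt (4 * ω - c ^ 2) * abs x), habs, Real.cosh_abs]
  rw [funext hptw]
  exact integral_comp_abs (f := fun t => (Real.cosh (σ * Real.sqrt (4 * ω - c ^ 2) * t)
    - c / (2 * Real.sqrt ω)) ^ e)


theorem soliton_momentum (σ ω c : ℝ) (hσ : 0 < σ) (h : c ^ 2 < 4 * ω) :
    -(1 / 2) *
        (∫ y : ℝ, (starRingEnd ℂ) (solComplex σ ω c y) * deriv (solComplex σ ω c) y).im
      = -(c / 2) * ((σ + 1) * (Real.sqrt (4 * ω - c ^ 2)) ^ 2 / (2 * Real.sqrt ω)) ^ (1 / σ) *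
          (∫ x in Set.Ioi (0 : ℝ),
            (Real.cosh (σ * Real.sqrt (4 * ω - c ^ 2) * x) - c / (2 * Real.sqrt ω)) ^ (-(1 / σ)))
        + (1 / (2 * σ + 2)) *
            ((σ + 1) * (Real.sqrt (4 * ω - c ^ 2)) ^ 2 / (2 * Real.sqrt ω)) ^ ((σ + 1) / σ) *
          (∫ x in Set.Ioi (0 : ℝ),
            (Real.cosh (σ * Real.sqrt (4 * ω - c ^ 2) * x) - c / (2 * Real.sqrt ω)) ^
              (-(1 / σ) - 1)) := by
  have hfn : (fun y => (starRingEnd ℂ) (solComplex σ ω c y) * deriv (solComplex σ ω c) y)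
      = fun y => ((solProfile σ ω c y * solD1 σ ω c y : ℝ) : ℂ)
        + ((solProfile σ ω c y ^ 2 * solD2 σ ω c y : ℝ) : ℂ) * Complex.I :=
    funext (integrand_eq hσ h)
  rw [hfn]
  have hInta := phi_D1_integrable hσ h
  have hIntb := phi_sq_D2_integrable hσ h
  have hInt : Integrable (fun y => ((solProfile σ ω c y * solD1 σ ω c y : ℝ) : ℂ)
      + ((solProfile σ ω c y ^ 2 * solD2 σ ω c y : ℝ) : ℂ) * Complex.I) :=
    hInta.ofReal.add (hIntb.ofReal.mul_const Complex.I)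
  rw [← RCLike.im_eq_complex_im, ← integral_im hInt]
  simp only [RCLike.im_eq_complex_im, Complex.add_im, Complex.mul_im, Complex.I_im, Complex.I_re,
    Complex.ofReal_im, Complex.ofReal_re, mul_zero, zero_mul, mul_one, add_zero, zero_add]
  have hb := funext (solProfile_sq_D2 hσ h)
  rw [hb, integral_sub
      ((solH_rpow_integrable hσ h (by positivity : (0:ℝ) < 1 / σ)).const_mul _)
      ((solH_rpow_integrable' hσ h).const_mul _),
    integral_const_mul, integral_const_mul,
    integral_solH_rpow (-(1 / σ)), integral_solH_rpow (-(1 / σ) - 1)]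
  unfold solF
  ring
end
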